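/- The number of Boolean functions f : F_2^k → F_2 that are of the form f(x) = h(x_1,...,x_{k-1}) ⊕ x_k with h depending on x_1, or of the form f(x) = x_1 ⊕ h'(x_2,...,x_k) with h' depending on x_k, and which satisfy f(0,...,0) = 0, is exactly 2^{2^{k-1}} − (3/2)·2^{2^{k-2}}. -/

import Mathlib

section Helpers
variable {α : Type*} [Fintype α] [DecidableEq α]

def fixEquiv (a : α) (v : Bool) : {f : α → Bool // f a = v} ≃ ({x : α // x ≠ a} → Bool) where
  toFun f x := f.1 x.1
  invFun g := ⟨fun x => if h : x = a then v else g ⟨x, h⟩, by simp⟩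
  left_inv f := Subtype.ext (funext fun x => by
    by_cases h : x = a
    · subst h; simp [f.2]
    · simp [h])
  right_inv g := funext fun x => by simp [x.2]

lemma card_ne (a : α) : Fintype.card {x : α // x ≠ a} = Fintype.card α - 1 := by
  simp [Fintype.card_subtype_compl (p := fun x => x = a), Fintype.card_subtype_eq]

lemma card_fix (a : α) (v : Bool) :
    Nat.card {f : α → Bool // f a = v} = 2 ^ (Fintype.card α - 1) := by
  rw [Nat.card_congr (fixEquiv a v), Nat.card_eq_fintype_card, Fintype.card_fun, card_ne]
  simp
end Helpers


/-- `h` depends on coordinate `i`. -/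
def BoolDependsOn {m : ℕ} (h : (Fin m → Bool) → Bool) (i : Fin m) : Prop :=
  ∃ x : Fin m → Bool, h x ≠ h (Function.update x i (!(x i)))

lemma nodep_update {m : ℕ} {h : (Fin m → Bool) → Bool} {i : Fin m}
    (hd : ¬BoolDependsOn h i) (x : Fin m → Bool) (b : Bool) :
    h (Function.update x i b) = h x := by
  simp only [BoolDependsOn, not_exists, ne_eq, not_not] at hd
  rcases Bool.eq_or_eq_not b (x i) with hb | hb
  · rw [hb, Function.update_eq_self]
  · rw [hb]; exact (hd x).symm

def nodepEquiv (m : ℕ) (i : Fin m) :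
    {h : (Fin m → Bool) → Bool // ¬BoolDependsOn h i ∧ h (fun _ => false) = false} ≃
    {g : ({x : Fin m → Bool // x i = false} → Bool) // g ⟨fun _ => false, rfl⟩ = false} where
  toFun h := ⟨fun x => h.1 x.1, h.2.2⟩
  invFun g := ⟨fun x => g.1 ⟨Function.update x i false, by simp⟩, by
    constructor
    · rintro ⟨x, hx⟩
      exact hx (congrArg g.1 (Subtype.ext (by simp)))
    · exact (congrArg g.1 (Subtype.ext (Function.update_eq_self i fun _ => false))).trans g.2⟩
  left_inv h := Subtype.ext (funext fun x => by
    simpa using nodep_update h.2.1 x false)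
  right_inv g := Subtype.ext (funext fun x => by
    refine (congrArg g.1 (Subtype.ext ?_)).trans rfl
    rw [Function.update_eq_self_iff]
    exact x.2.symm)

lemma card_dom (m : ℕ) : Fintype.card (Fin m → Bool) = 2 ^ m := by
  simp [Fintype.card_fun]

lemma card_nodep (m : ℕ) (i : Fin m) :
    Nat.card {h : (Fin m → Bool) → Bool // ¬BoolDependsOn h i ∧ h (fun _ => false) = false} =
      2 ^ (2 ^ (m - 1) - 1) := by
  rw [Nat.card_congr (nodepEquiv m i), card_fix]
  congr 1
  rw [Fintype.card_congr (fixEquiv i false), Fintype.card_fun, card_ne]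
  simp

lemma card_dep (m : ℕ) (i : Fin m) :
    Nat.card {h : (Fin m → Bool) → Bool // BoolDependsOn h i ∧ h (fun _ => false) = false} =
      2 ^ (2 ^ m - 1) - 2 ^ (2 ^ (m - 1) - 1) := by
  classical
  set S1 : Set ((Fin m → Bool) → Bool) := {h | BoolDependsOn h i ∧ h (fun _ => false) = false}
  set S2 : Set ((Fin m → Bool) → Bool) := {h | ¬BoolDependsOn h i ∧ h (fun _ => false) = false}
  set U : Set ((Fin m → Bool) → Bool) := {h | h (fun _ => false) = false}
  have hU : S1 ∪ S2 = U := by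
    ext h
    by_cases hd : BoolDependsOn h i <;> simp [S1, S2, U, hd]
  have hdisj : Disjoint S1 S2 := by
    rw [Set.disjoint_left]
    rintro h ⟨h1, -⟩ ⟨h2, -⟩
    exact h2 h1
  have hsum : U.ncard = S1.ncard + S2.ncard := by
    rw [← hU]
    exact Set.ncard_union_eq hdisj (Set.toFinite _) (Set.toFinite _)
  have e1 : U.ncard = 2 ^ (2 ^ m - 1) := by
    have : U.ncard = Nat.card {h : (Fin m → Bool) → Bool // h (fun _ => false) = false} := rfl
    rw [this, card_fix, card_dom]
  have e2 : S2.ncard = 2 ^ (2 ^ (m - 1) - 1) := by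
    have : S2.ncard = Nat.card {h : (Fin m → Bool) → Bool // ¬BoolDependsOn h i ∧ h (fun _ => false) = false} := rfl
    rw [this, card_nodep]
  have e0 : (Nat.card {h : (Fin m → Bool) → Bool // BoolDependsOn h i ∧ h (fun _ => false) = false}) = S1.ncard := by rfl
  rw [e0, ← e1, ← e2]
  exact Nat.eq_sub_of_add_eq hsum.symm
def phiA (k : ℕ) (h : (Fin k → Bool) → Bool) : (Fin (k + 1) → Bool) → Bool :=
  fun x => xor (h fun j => x j.castSucc) (x (Fin.last k))

def phiB (k : ℕ) (h : (Fin k → Bool) → Bool) : (Fin (k + 1) → Bool) → Bool :=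
  fun x => xor (x 0) (h fun j => x j.succ)

lemma phiA_snoc {k : ℕ} (h : (Fin k → Bool) → Bool) (y : Fin k → Bool) :
    phiA k h (Fin.snoc y false) = h y := by
  simp [phiA]

lemma phiB_cons {k : ℕ} (h : (Fin k → Bool) → Bool) (y : Fin k → Bool) :
    phiB k h (Fin.cons false y) = h y := by
  simp [phiB]

lemma phiA_inj {k : ℕ} : Function.Injective (phiA k) := fun h1 h2 e => by
  funext y
  rw [← phiA_snoc h1 y, ← phiA_snoc h2 y, e]

lemma phiB_inj {k : ℕ} : Function.Injective (phiB k) := fun h1 h2 e => by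
  funext y
  rw [← phiB_cons h1 y, ← phiB_cons h2 y, e]

lemma phiA_zero {k : ℕ} (h : (Fin k → Bool) → Bool) :
    phiA k h (fun _ => false) = h (fun _ => false) := by simp [phiA]

lemma phiB_zero {k : ℕ} (h : (Fin k → Bool) → Bool) :
    phiB k h (fun _ => false) = h (fun _ => false) := by simp [phiB]

section Main

variable {k : ℕ}

lemma castSucc_i0 (hk : 1 ≤ k) : Fin.castSucc (⟨0, hk⟩ : Fin k) = 0 := by
  ext; simp

lemma succ_iK (hk : 1 ≤ k) : Fin.succ (⟨k - 1, Nat.sub_lt hk Nat.one_pos⟩ : Fin k) = Fin.last k := by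
  ext; simp; omega

-- τ is invariant under changing coordinate i0
lemma tau_update (hk : 1 ≤ k) (y : Fin k → Bool) (b : Bool) :
    (fun j : Fin k => (Fin.snoc (Function.update y ⟨0, hk⟩ b) false : Fin (k+1) → Bool) j.succ) =
      (fun j : Fin k => (Fin.snoc y false : Fin (k+1) → Bool) j.succ) := by
  funext j
  rcases Fin.eq_castSucc_or_eq_last j.succ with ⟨j', hj'⟩ | hj'
  · rw [hj', Fin.snoc_castSucc, Fin.snoc_castSucc, Function.update_of_ne]
    intro hji
    have h1 : (j' : ℕ) = (j : ℕ) + 1 := by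
      have := congrArg Fin.val hj'
      simpa using this.symm
    rw [hji] at h1
    simp at h1
  · rw [hj', Fin.snoc_last, Fin.snoc_last]

lemma cons_tail_eq (x : Fin (k + 1) → Bool) :
    (Fin.cons false (fun j => x j.succ) : Fin (k + 1) → Bool) = Function.update x 0 false := by
  funext j
  rcases Fin.eq_zero_or_eq_succ j with h0 | ⟨j', hj'⟩
  · rw [h0]; simp
  · rw [hj', Fin.cons_succ, Function.update_of_ne (Fin.succ_ne_zero j')]

lemma init_update (hk : 1 ≤ k) (x : Fin (k + 1) → Bool) :
    (fun j : Fin k => Function.update x 0 false j.castSucc) =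
      Function.update (fun j : Fin k => x j.castSucc) ⟨0, hk⟩ false := by
  funext j
  by_cases hj : j = (⟨0, hk⟩ : Fin k)
  · rw [hj]
    rw [show Fin.castSucc (⟨0, hk⟩ : Fin k) = 0 from castSucc_i0 hk]
    simp
  · rw [Function.update_of_ne hj, Function.update_of_ne]
    intro hc
    apply hj
    ext
    have := congrArg Fin.val hc
    simpa using this

lemma consInit_update (hk : 1 ≤ k) (y : Fin k → Bool) (b : Bool) :
    (fun j : Fin k => (Fin.cons false (Function.update y ⟨k - 1, Nat.sub_lt hk Nat.one_pos⟩ b) : Fin (k + 1) → Bool) j.castSucc) =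
      (fun j : Fin k => (Fin.cons false y : Fin (k + 1) → Bool) j.castSucc) := by
  funext j
  rcases Fin.eq_zero_or_eq_succ j.castSucc with h0 | ⟨j', hj'⟩
  · rw [h0, Fin.cons_zero, Fin.cons_zero]
  · rw [hj', Fin.cons_succ, Fin.cons_succ, Function.update_of_ne]
    intro hc
    have h1 : (j : ℕ) = (j' : ℕ) + 1 := by
      have := congrArg Fin.val hj'
      simpa using this
    have h2 : (j' : ℕ) = k - 1 := by rw [hc]
    have := j.isLt
    omega

end Main
def linEquiv (m : ℕ) (i : Fin m) :
    {h : (Fin m → Bool) → Bool //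
        (∀ x, h x = xor (x i) (h (Function.update x i false))) ∧ h (fun _ => false) = false} ≃
    {g : ({x : Fin m → Bool // x i = false} → Bool) // g ⟨fun _ => false, rfl⟩ = false} where
  toFun h := ⟨fun x => h.1 x.1, h.2.2⟩
  invFun g := ⟨fun x => xor (x i) (g.1 ⟨Function.update x i false, by simp⟩), by
    constructor
    · intro x
      simp only [Function.update_self, Bool.false_xor]
      congr 1
      exact congrArg g.1 (Subtype.ext (by simp))
    · simp only [Bool.false_xor]
      exact (congrArg g.1 (Subtype.ext (Function.update_eq_self i fun _ => false))).trans g.2⟩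
  left_inv h := Subtype.ext (funext fun x => (h.2.1 x).symm)
  right_inv g := Subtype.ext (funext fun x => by
    have hx : Function.update x.1 i false = x.1 := by
      rw [Function.update_eq_self_iff]; exact x.2.symm
    simp only [x.2, Bool.false_xor]
    exact congrArg g.1 (Subtype.ext hx))

lemma card_lin (m : ℕ) (i : Fin m) :
    Nat.card {h : (Fin m → Bool) → Bool //
        (∀ x, h x = xor (x i) (h (Function.update x i false))) ∧ h (fun _ => false) = false} =
      2 ^ (2 ^ (m - 1) - 1) := by
  rw [Nat.card_congr (linEquiv m i), card_fix]
  congr 1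
  rw [Fintype.card_congr (fixEquiv i false), Fintype.card_fun, card_ne]
  simp

/-- Counting the permutive functions `f : F_2^{k+1} → F_2` of full diameter
(of the form `h(x₁,…,x_k) ⊕ x_{k+1}` with `h` depending on `x₁`, or
`x₁ ⊕ h'(x₂,…,x_{k+1})` with `h'` depending on `x_{k+1}`) normalized by
`f(0,…,0) = 0`: there are exactly `2^{2^k} - 3·2^{2^{k-1}-1}` of them. -/
theorem stmt5 {k : ℕ} (hk : 1 ≤ k) :
    Nat.card {f : (Fin (k + 1) → Bool) → Bool //
      ((∃ h : (Fin k → Bool) → Bool, BoolDependsOn h ⟨0, hk⟩ ∧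
          ∀ x : Fin (k + 1) → Bool, f x = xor (h fun j => x j.castSucc) (x (Fin.last k))) ∨
       (∃ h' : (Fin k → Bool) → Bool, BoolDependsOn h' ⟨k - 1, by omega⟩ ∧
          ∀ x : Fin (k + 1) → Bool, f x = xor (x 0) (h' fun j => x j.succ))) ∧
      f (fun _ => false) = false} = 2 ^ 2 ^ k - 3 * 2 ^ (2 ^ (k - 1) - 1) := by
  classical
  have hkk : k - 1 < k := by omega
  have hcs : Fin.castSucc (⟨0, hk⟩ : Fin k) = 0 := castSucc_i0 hk
  have hsk : Fin.succ (⟨k - 1, hkk⟩ : Fin k) = Fin.last k := succ_iK hk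
  set TA : Set ((Fin k → Bool) → Bool) :=
    {h | BoolDependsOn h ⟨0, hk⟩ ∧ h (fun _ => false) = false} with hTAdef
  set TB : Set ((Fin k → Bool) → Bool) :=
    {h | BoolDependsOn h ⟨k - 1, hkk⟩ ∧ h (fun _ => false) = false} with hTBdef
  set TL : Set ((Fin k → Bool) → Bool) :=
    {h | (∀ x, h x = xor (x ⟨0, hk⟩) (h (Function.update x ⟨0, hk⟩ false))) ∧
      h (fun _ => false) = false} with hTLdef
  set A : Set ((Fin (k + 1) → Bool) → Bool) := phiA k '' TA with hAdef
  set B : Set ((Fin (k + 1) → Bool) → Bool) := phiB k '' TB with hBdef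
  -- the statement's set equals A ∪ B
  have hS : {f : (Fin (k + 1) → Bool) → Bool |
      ((∃ h : (Fin k → Bool) → Bool, BoolDependsOn h ⟨0, hk⟩ ∧
          ∀ x : Fin (k + 1) → Bool, f x = xor (h fun j => x j.castSucc) (x (Fin.last k))) ∨
       (∃ h' : (Fin k → Bool) → Bool, BoolDependsOn h' ⟨k - 1, hkk⟩ ∧
          ∀ x : Fin (k + 1) → Bool, f x = xor (x 0) (h' fun j => x j.succ))) ∧
      f (fun _ => false) = false} = A ∪ B := by
    ext f
    simp only [Set.mem_union, Set.mem_setOf_eq, hAdef, hBdef, Set.mem_image, hTAdef, hTBdef]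
    constructor
    · rintro ⟨hor, hf0⟩
      rcases hor with ⟨h, hD, hs⟩ | ⟨h, hD, hs⟩
      · left
        refine ⟨h, ⟨hD, ?_⟩, (funext fun x => (hs x).symm)⟩
        have h1 := hs (fun _ => false)
        rw [hf0] at h1
        simpa using h1.symm
      · right
        refine ⟨h, ⟨hD, ?_⟩, (funext fun x => (hs x).symm)⟩
        have h1 := hs (fun _ => false)
        rw [hf0] at h1
        simpa using h1.symm
    · rintro (⟨h, ⟨hD, h0⟩, rfl⟩ | ⟨h, ⟨hD, h0⟩, rfl⟩)
      · exact ⟨Or.inl ⟨h, hD, fun x => rfl⟩, by rw [phiA_zero]; exact h0⟩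
      · exact ⟨Or.inr ⟨h, hD, fun x => rfl⟩, by rw [phiB_zero]; exact h0⟩
  -- the intersection
  have hI : A ∩ B = phiA k '' TL := by
    ext f
    simp only [Set.mem_inter_iff, hAdef, hBdef, Set.mem_image, hTAdef, hTBdef, hTLdef,
      Set.mem_setOf_eq]
    constructor
    · rintro ⟨⟨h1, ⟨hD1, h10⟩, rfl⟩, ⟨h2, ⟨hD2, h20⟩, hBe⟩⟩
      refine ⟨h1, ⟨?_, h10⟩, rfl⟩
      have e1 : ∀ z : Fin k → Bool,
          h1 z = xor (z ⟨0, hk⟩)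
            (h2 fun j => (Fin.snoc z false : Fin (k + 1) → Bool) j.succ) := by
        intro z
        have hz := congrFun hBe (Fin.snoc z false)
        rw [phiA_snoc] at hz
        rw [← hz]
        show xor ((Fin.snoc z false : Fin (k + 1) → Bool) 0)
            (h2 fun j => (Fin.snoc z false : Fin (k + 1) → Bool) j.succ) = _
        rw [show ((Fin.snoc z false : Fin (k + 1) → Bool) 0) = z ⟨0, hk⟩ from by
          rw [← hcs, Fin.snoc_castSucc]]
      intro y
      have e2 := e1 (Function.update y ⟨0, hk⟩ false)
      rw [tau_update hk y false] at e2
      rw [Function.update_self, Bool.false_xor] at e2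
      rw [e1 y, ← e2]
    · rintro ⟨h, ⟨hLin, h0⟩, rfl⟩
      constructor
      · -- membership in A
        refine ⟨h, ⟨⟨fun _ => false, ?_⟩, h0⟩, rfl⟩
        have hzero : Function.update (fun _ : Fin k => false) ⟨0, hk⟩ false
            = fun _ => false := by
          rw [Function.update_eq_self_iff]
        have hu : h (Function.update (fun _ : Fin k => false) ⟨0, hk⟩ true) = true := by
          rw [hLin (Function.update (fun _ : Fin k => false) ⟨0, hk⟩ true),
            Function.update_self, Function.update_idem, hzero, h0]
          rfl
        show h (fun _ => false) ≠ h (Function.update (fun _ => false) ⟨0, hk⟩ (!(false)))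
        rw [h0, Bool.not_false, hu]
        simp
      · -- membership in B
        refine ⟨fun y => xor (h fun j => (Fin.cons false y : Fin (k + 1) → Bool) j.castSucc)
          (y ⟨k - 1, hkk⟩), ⟨?_, ?_⟩, ?_⟩
        · -- depends on iK
          refine ⟨fun _ => false, ?_⟩
          show xor _ ((fun _ : Fin k => false) ⟨k - 1, hkk⟩) ≠
            xor _ ((Function.update (fun _ : Fin k => false) ⟨k - 1, hkk⟩ (!(false)))
              ⟨k - 1, hkk⟩)
          rw [Bool.not_false, Function.update_self]
          rw [consInit_update hk (fun _ => false) true]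
          cases h fun j => (Fin.cons false (fun _ => false) : Fin (k + 1) → Bool) j.castSucc <;>
            simp
        · -- h' vanishes at 0
          show xor (h fun j => (Fin.cons false (fun _ => false) : Fin (k + 1) → Bool) j.castSucc)
            ((fun _ : Fin k => false) ⟨k - 1, hkk⟩) = false
          have hz : (fun j : Fin k =>
              (Fin.cons false (fun _ => false) : Fin (k + 1) → Bool) j.castSucc) =
              fun _ => false := by
            funext j
            rcases Fin.eq_zero_or_eq_succ j.castSucc with h0' | ⟨j', hj'⟩
            · rw [h0', Fin.cons_zero]
            · rw [hj', Fin.cons_succ]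
          rw [hz, h0]
          rfl
        · -- phiB of it equals f = phiA h
          funext x
          show xor (x 0) (xor (h fun j =>
              (Fin.cons false (fun j' => x j'.succ) : Fin (k + 1) → Bool) j.castSucc)
            (x (Fin.succ ⟨k - 1, hkk⟩))) = xor (h fun j => x j.castSucc) (x (Fin.last k))
          rw [cons_tail_eq x, init_update hk x, hsk, hLin (fun j : Fin k => x j.castSucc)]
          rw [hcs, Bool.xor_assoc]
  suffices hfin : (A ∪ B).ncard = 2 ^ 2 ^ k - 3 * 2 ^ (2 ^ (k - 1) - 1) by
    rw [← hfin, ← hS]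
    rfl
  have cA : A.ncard = 2 ^ (2 ^ k - 1) - 2 ^ (2 ^ (k - 1) - 1) := by
    rw [hAdef, Set.ncard_image_of_injective TA phiA_inj]
    have hh : TA.ncard = Nat.card {h : (Fin k → Bool) → Bool //
        BoolDependsOn h ⟨0, hk⟩ ∧ h (fun _ => false) = false} := rfl
    rw [hh, card_dep]
  have cB : B.ncard = 2 ^ (2 ^ k - 1) - 2 ^ (2 ^ (k - 1) - 1) := by
    rw [hBdef, Set.ncard_image_of_injective TB phiB_inj]
    have hh : TB.ncard = Nat.card {h : (Fin k → Bool) → Bool //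
        BoolDependsOn h ⟨k - 1, hkk⟩ ∧ h (fun _ => false) = false} := rfl
    rw [hh, card_dep]
  have cI : (A ∩ B).ncard = 2 ^ (2 ^ (k - 1) - 1) := by
    rw [hI, Set.ncard_image_of_injective TL phiA_inj]
    have hh : TL.ncard = Nat.card {h : (Fin k → Bool) → Bool //
        (∀ x, h x = xor (x ⟨0, hk⟩) (h (Function.update x ⟨0, hk⟩ false))) ∧
        h (fun _ => false) = false} := rfl
    rw [hh, card_lin]
  have hun := Set.ncard_union_add_ncard_inter A B (Set.toFinite A) (Set.toFinite B)
  rw [cA, cB, cI] at hun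
  have hQP : 2 ^ (2 ^ (k - 1) - 1) ≤ 2 ^ (2 ^ k - 1) := by
    apply Nat.pow_le_pow_right (by norm_num)
    have := Nat.pow_le_pow_right (show 1 ≤ 2 by norm_num) (Nat.sub_le k 1)
    omega
  have h2P : 2 ^ 2 ^ k = 2 * 2 ^ (2 ^ k - 1) := by
    have h1 : 1 ≤ 2 ^ k := Nat.one_le_two_pow
    rw [← pow_succ']
    congr 1
    omega
  omega
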